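/- Let X be an η-weakly dependent strictly stationary process with ‖X₀‖_m < ∞ for some m > 4 and η_r = O(r^{−α}) with α > 3. Then the covariogram satisfies |R(ℓ)| ≤ c·|ℓ|^{−α(m−2)/(m−1)} for some constant c > 0, and consequently Σ_{|ℓ|≥n} R(ℓ)² ≤ c'·n^{1 − 2α(m−2)/(m−1)}. -/

import Mathlib

open MeasureTheory Filter

namespace Stmt17Aux

noncomputable def trunc (M x : ℝ) : ℝ := max (-M) (min M x)

lemma trunc_abs_le {M : ℝ} (hM : 0 ≤ M) (x : ℝ) : |trunc M x| ≤ M := by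
  rw [abs_le]
  exact ⟨le_max_left _ _, max_le (by linarith) (min_le_left _ _)⟩

lemma trunc_lip (M x y : ℝ) : |trunc M x - trunc M y| ≤ |x - y| := by
  refine (abs_max_sub_max_le_max _ _ _ _).trans (max_le (by simp) ?_)
  refine (abs_min_sub_min_le_max _ _ _ _).trans ?_
  simp

lemma trunc_eq_self {M x : ℝ} (h : |x| ≤ M) : trunc M x = x := by
  rw [abs_le] at h
  rw [trunc, min_eq_right h.2, max_eq_right h.1]

lemma sub_trunc_le {M m : ℝ} (hM : 1 ≤ M) (hm : 1 ≤ m) (x : ℝ) :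
    |x - trunc M x| ≤ |x| ^ m / M ^ (m - 1) := by
  rcases le_or_gt |x| M with h | h
  · rw [trunc_eq_self h, sub_self, abs_zero]
    positivity
  · have h1 : |x - trunc M x| ≤ |x| := by
      rcases lt_abs.mp h with h' | h'
      · rw [trunc, min_eq_left h'.le, max_eq_right (by linarith),
          abs_of_nonneg (by linarith), abs_of_nonneg (by linarith)]
        linarith
      · rw [trunc, min_eq_right (by linarith), max_eq_left (by linarith),
          abs_of_nonpos (by linarith), abs_of_nonpos (by linarith)]
        linarith
    have hx1 : (1:ℝ) ≤ |x| := le_trans hM h.le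
    have h2 : |x| * M ^ (m - 1) ≤ |x| ^ m := by
      calc |x| * M ^ (m - 1) ≤ |x| * |x| ^ (m - 1) := by
            have := Real.rpow_le_rpow (by linarith : (0:ℝ) ≤ M) h.le (by linarith : (0:ℝ) ≤ m - 1)
            exact mul_le_mul_of_nonneg_left this (abs_nonneg x)
        _ = |x| ^ (1 + (m - 1)) := by
            rw [Real.rpow_add (by linarith : (0:ℝ) < |x|), Real.rpow_one]
        _ = |x| ^ m := by ring_nf
    exact h1.trans ((le_div_iff₀ (by positivity)).mpr h2)

lemma rpow_two_self {z : ℝ} (hz : 0 ≤ z) : z ^ (2:ℝ) = z * z := by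
  rw [show (2:ℝ) = ((2:ℕ):ℝ) by norm_num, Real.rpow_natCast]
  ring

lemma prod_trunc {M m : ℝ} (hM : 1 ≤ M) (hm : 2 ≤ m) (x y : ℝ) :
    |x * y - trunc M x * trunc M y| ≤ 2 / M ^ (m - 2) * (|x| ^ m + |y| ^ m) := by
  rcases le_or_gt (max |x| |y|) M with hz | hz
  · rw [trunc_eq_self (le_trans (le_max_left _ _) hz),
      trunc_eq_self (le_trans (le_max_right _ _) hz), sub_self, abs_zero]
    positivity
  · set z := max |x| |y| with hzdef
    have hz0 : (0:ℝ) < z := lt_trans (by linarith) hz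
    have hz1 : (1:ℝ) ≤ z := le_trans hM hz.le
    have h1 : |x * y - trunc M x * trunc M y| ≤ 2 * (z * z) := by
      have a1 : |x * y| ≤ z * z := by
        rw [abs_mul]
        exact mul_le_mul (le_max_left _ _) (le_max_right _ _) (abs_nonneg _) (by positivity)
      have a2 : |trunc M x * trunc M y| ≤ M * M := by
        rw [abs_mul]
        exact mul_le_mul (trunc_abs_le (by linarith) _) (trunc_abs_le (by linarith) _)
          (abs_nonneg _) (by linarith)
      have := abs_sub (x * y) (trunc M x * trunc M y)
      nlinarith
    have h2 : z * z * M ^ (m - 2) ≤ z ^ m := by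
      calc z * z * M ^ (m - 2) ≤ z * z * z ^ (m - 2) := by
            have := Real.rpow_le_rpow (by linarith : (0:ℝ) ≤ M) hz.le (by linarith : (0:ℝ) ≤ m - 2)
            exact mul_le_mul_of_nonneg_left this (by positivity)
        _ = z ^ ((2:ℝ) + (m - 2)) := by rw [Real.rpow_add hz0, rpow_two_self hz0.le]
        _ = z ^ m := by ring_nf
    have h3 : z ^ m ≤ |x| ^ m + |y| ^ m := by
      rcases max_choice |x| |y| with h | h <;> rw [hzdef, h]
      · have : (0:ℝ) ≤ |y| ^ m := Real.rpow_nonneg (abs_nonneg _) _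
        linarith
      · have : (0:ℝ) ≤ |x| ^ m := Real.rpow_nonneg (abs_nonneg _) _
        linarith
    have hMm : (0:ℝ) < M ^ (m - 2) := by positivity
    calc |x * y - trunc M x * trunc M y| ≤ 2 * (z * z) := h1
      _ ≤ 2 * (z ^ m / M ^ (m - 2)) := by
          have : z * z ≤ z ^ m / M ^ (m - 2) := (le_div_iff₀ hMm).mpr h2
          linarith
      _ ≤ 2 / M ^ (m - 2) * (|x| ^ m + |y| ^ m) := by
          rw [mul_div_assoc', div_mul_eq_mul_div]
          gcongr

lemma abs_le_one_add {m : ℝ} (hm : 1 ≤ m) (x : ℝ) : |x| ≤ 1 + |x| ^ m := by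
  rcases le_or_gt |x| 1 with h | h
  · have : (0:ℝ) ≤ |x| ^ m := Real.rpow_nonneg (abs_nonneg _) _
    linarith
  · calc |x| = |x| ^ (1:ℝ) := (Real.rpow_one _).symm
      _ ≤ |x| ^ m := Real.rpow_le_rpow_of_exponent_le h.le hm
      _ ≤ 1 + |x| ^ m := by linarith

lemma abs_mul_le {m : ℝ} (hm : 2 ≤ m) (x y : ℝ) : |x * y| ≤ 1 + (|x| ^ m + |y| ^ m) := by
  set z := max |x| |y| with hzdef
  have hz0 : (0:ℝ) ≤ z := le_trans (abs_nonneg x) (le_max_left _ _)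
  have a1 : |x * y| ≤ z * z := by
    rw [abs_mul]
    exact mul_le_mul (le_max_left _ _) (le_max_right _ _) (abs_nonneg _) hz0
  have hxm : (0:ℝ) ≤ |x| ^ m := Real.rpow_nonneg (abs_nonneg _) _
  have hym : (0:ℝ) ≤ |y| ^ m := Real.rpow_nonneg (abs_nonneg _) _
  rcases le_or_gt z 1 with h | h
  · nlinarith
  · have h2 : z * z ≤ z ^ m := by
      rw [← rpow_two_self hz0]
      exact Real.rpow_le_rpow_of_exponent_le h.le hm
    have h3 : z ^ m ≤ |x| ^ m + |y| ^ m := by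
      rcases max_choice |x| |y| with h' | h' <;> rw [hzdef, h'] <;> linarith
    linarith

end Stmt17Aux

open Stmt17Aux

set_option maxHeartbeats 2000000

/-- for an η-weakly dependent strictly stationary process with moments of
order `m > 4` and `η_r = O(r^{−α})`, `α > 3`, the covariogram satisfies
`|R(ℓ)| ≤ c|ℓ|^{−α(m−2)/(m−1)}` and `Σ_{|ℓ|≥n} R(ℓ)² ≤ c' n^{1−2α(m−2)/(m−1)}`. -/
theorem stmt17
    {Ω : Type*} [MeasurableSpace Ω] (μ : Measure Ω) [IsProbabilityMeasure μ]
    (X : ℤ → Ω → ℝ) (R : ℤ → ℝ) (η : ℕ → ℝ) (m α : ℝ)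
    (hm : 4 < m) (hα : 3 < α)
    (hηpos : ∀ r, 0 ≤ η r)
    (hmeas : ∀ i, Measurable (X i))
    (hzero : ∀ i : ℤ, ∫ ω, X i ω ∂μ = 0)
    (hXm : Integrable (fun ω => |X 0 ω| ^ m) μ)
    (hstat : ∀ (t : ℤ) (d : ℕ) (idx : Fin d → ℤ),
      Measure.map (fun ω => fun i => X (idx i + t) ω) μ
        = Measure.map (fun ω => fun i => X (idx i) ω) μ)
    (hR : ∀ ℓ : ℤ, R ℓ = ∫ ω, X 0 ω * X ℓ ω ∂μ)
    -- η-weak dependence of X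
    (hηdep : ∀ (r u v : ℕ) (iidx : Fin u → ℤ) (jidx : Fin v → ℤ),
      Monotone iidx → Monotone jidx →
      (∀ (a : Fin u) (b : Fin v), iidx a + r ≤ jidx b) →
      ∀ (g₁ : (Fin u → ℝ) → ℝ) (g₂ : (Fin v → ℝ) → ℝ) (L₁ L₂ B₁ B₂ : ℝ),
        (∀ x, |g₁ x| ≤ B₁) → (∀ x, |g₂ x| ≤ B₂) →
        (∀ x y, |g₁ x - g₁ y| ≤ L₁ * ∑ i, |x i - y i|) →
        (∀ x y, |g₂ x - g₂ y| ≤ L₂ * ∑ i, |x i - y i|) →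
        |(∫ ω, g₁ (fun a => X (iidx a) ω) * g₂ (fun b => X (jidx b) ω) ∂μ)
            - (∫ ω, g₁ (fun a => X (iidx a) ω) ∂μ) * ∫ ω, g₂ (fun b => X (jidx b) ω) ∂μ|
          ≤ ((u : ℝ) * L₁ * B₂ + (v : ℝ) * L₂ * B₁) * η r)
    -- η_r = O(r^{−α})
    (hηrate : ∃ K : ℝ, 0 < K ∧ ∀ r : ℕ, 1 ≤ r → η r ≤ K * (r : ℝ) ^ (-α)) :
    (∃ c : ℝ, 0 < c ∧ ∀ ℓ : ℤ, ℓ ≠ 0 →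
      |R ℓ| ≤ c * |(ℓ : ℝ)| ^ (-(α * (m - 2) / (m - 1))))
    ∧ (∃ c' : ℝ, 0 < c' ∧ ∀ n : ℕ, 1 ≤ n →
      (∑' ℓ : {ℓ : ℤ // (n : ℤ) ≤ |ℓ|}, R (ℓ : ℤ) ^ 2)
        ≤ c' * (n : ℝ) ^ (1 - 2 * α * (m - 2) / (m - 1))) := by
  classical
  obtain ⟨K, hK, hKrate⟩ := hηrate
  have hm1 : (0:ℝ) < m - 1 := by linarith
  have hmeasF : ∀ (d : ℕ) (idx : Fin d → ℤ), Measurable (fun ω => fun i => X (idx i) ω) :=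
    fun d idx => measurable_pi_lambda _ (fun i => hmeas _)
  have shift : ∀ (t : ℤ) (d : ℕ) (idx : Fin d → ℤ) (g : (Fin d → ℝ) → ℝ), Measurable g →
      ∫ ω, g (fun i => X (idx i + t) ω) ∂μ = ∫ ω, g (fun i => X (idx i) ω) ∂μ := by
    intro t d idx g hg
    rw [← integral_map (hmeasF d (fun i => idx i + t)).aemeasurable hg.aestronglyMeasurable,
        ← integral_map (hmeasF d idx).aemeasurable hg.aestronglyMeasurable, hstat]
  have shiftInt : ∀ (t : ℤ) (d : ℕ) (idx : Fin d → ℤ) (g : (Fin d → ℝ) → ℝ), Measurable g →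
      Integrable (fun ω => g (fun i => X (idx i) ω)) μ →
      Integrable (fun ω => g (fun i => X (idx i + t) ω)) μ := by
    intro t d idx g hg h
    have h1 := (integrable_map_measure hg.aestronglyMeasurable (hmeasF d idx).aemeasurable).mpr h
    rw [← hstat t d idx] at h1
    exact (integrable_map_measure hg.aestronglyMeasurable
      (hmeasF d (fun i => idx i + t)).aemeasurable).mp h1
  have habsm : Measurable fun x : ℝ => |x| ^ m :=
    ((Real.continuous_rpow_const (by linarith)).comp continuous_abs).measurable
  have hXmi : ∀ i : ℤ, Integrable (fun ω => |X i ω| ^ m) μ := by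
    intro i
    have := shiftInt i 1 (fun _ => 0) (fun v => |v 0| ^ m)
      (habsm.comp (measurable_pi_apply 0)) (by simpa using hXm)
    simpa using this
  have hEm : ∀ i : ℤ, ∫ ω, |X i ω| ^ m ∂μ = ∫ ω, |X 0 ω| ^ m ∂μ := by
    intro i
    have := shift i 1 (fun _ => 0) (fun v => |v 0| ^ m) (habsm.comp (measurable_pi_apply 0))
    simpa using this
  set Em := ∫ ω, |X 0 ω| ^ m ∂μ with hEmdef
  have hEm0 : 0 ≤ Em := integral_nonneg (fun ω => Real.rpow_nonneg (abs_nonneg _) _)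
  have hXi : ∀ i : ℤ, Integrable (X i) μ := by
    intro i
    refine Integrable.mono' ((integrable_const 1).add (hXmi i)) (hmeas i).aestronglyMeasurable ?_
    filter_upwards with ω
    simpa [Real.norm_eq_abs] using abs_le_one_add (by linarith : (1:ℝ) ≤ m) (X i ω)
  have hXprod : ∀ i j : ℤ, Integrable (fun ω => X i ω * X j ω) μ := by
    intro i j
    refine Integrable.mono' ((integrable_const 1).add ((hXmi i).add (hXmi j)))
      ((hmeas i).mul (hmeas j)).aestronglyMeasurable ?_
    filter_upwards with ω
    rw [Real.norm_eq_abs]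
    exact abs_mul_le (by linarith : (2:ℝ) ≤ m) (X i ω) (X j ω)
  have htm : ∀ M : ℝ, Measurable (trunc M) := fun M =>
    (continuous_const.max (continuous_const.min continuous_id)).measurable
  have htint : ∀ (M : ℝ), 0 ≤ M → ∀ i : ℤ, Integrable (fun ω => trunc M (X i ω)) μ := by
    intro M hM i
    refine Integrable.mono' (integrable_const M) (((htm M).comp (hmeas i)).aestronglyMeasurable) ?_
    filter_upwards with ω
    simpa [Real.norm_eq_abs] using trunc_abs_le hM (X i ω)
  have htpint : ∀ (M : ℝ), 0 ≤ M → ∀ i j : ℤ,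
      Integrable (fun ω => trunc M (X i ω) * trunc M (X j ω)) μ := by
    intro M hM i j
    refine Integrable.mono' (integrable_const (M * M))
      (((htm M).comp (hmeas i)).mul ((htm M).comp (hmeas j))).aestronglyMeasurable ?_
    filter_upwards with ω
    rw [Real.norm_eq_abs, abs_mul]
    exact mul_le_mul (trunc_abs_le hM _) (trunc_abs_le hM _) (abs_nonneg _) hM
  set β := α * (m - 2) / (m - 1) with hβ
  have key : ∀ ℓ : ℤ, 1 ≤ ℓ → |R ℓ| ≤ (4 * Em + 2 * K + Em * Em) * ((ℓ : ℤ) : ℝ) ^ (-β) := by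
    intro ℓ hℓ
    set r : ℕ := ℓ.toNat with hrdef
    have hr1 : 1 ≤ r := by omega
    have hrℓ : (r : ℤ) = ℓ := Int.toNat_of_nonneg (by omega)
    have hrR1 : (1:ℝ) ≤ (r:ℝ) := by exact_mod_cast hr1
    have hrR0 : (0:ℝ) < (r:ℝ) := by linarith
    set M := (r : ℝ) ^ (α / (m - 1)) with hMdef
    have hM1 : 1 ≤ M := by
      have h := Real.rpow_le_rpow_of_exponent_le hrR1
        (show (0:ℝ) ≤ α / (m - 1) by positivity)
      rwa [Real.rpow_zero] at h
    have hM0 : (0:ℝ) < M := by linarith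
    have hMm2 : (0:ℝ) < M ^ (m - 2) := by positivity
    -- step 1 : truncation error
    have hRA : |R ℓ - ∫ ω, trunc M (X 0 ω) * trunc M (X ℓ ω) ∂μ|
        ≤ 4 * Em / M ^ (m - 2) := by
      rw [hR, ← integral_sub (hXprod 0 ℓ) (htpint M (by linarith) 0 ℓ)]
      have h1 := norm_integral_le_integral_norm
        (fun ω => X 0 ω * X ℓ ω - trunc M (X 0 ω) * trunc M (X ℓ ω)) (μ := μ)
      simp only [Real.norm_eq_abs] at h1
      refine h1.trans ?_
      have h2 : ∫ ω, |X 0 ω * X ℓ ω - trunc M (X 0 ω) * trunc M (X ℓ ω)| ∂μ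
          ≤ ∫ ω, 2 / M ^ (m - 2) * (|X 0 ω| ^ m + |X ℓ ω| ^ m) ∂μ := by
        refine integral_mono_of_nonneg (Eventually.of_forall fun ω => abs_nonneg _)
          (((hXmi 0).add (hXmi ℓ)).const_mul _) (Eventually.of_forall fun ω => ?_)
        exact prod_trunc hM1 (by linarith) _ _
      refine h2.trans (le_of_eq ?_)
      rw [integral_const_mul, integral_add (hXmi 0) (hXmi ℓ), hEm ℓ, hEm 0]
      ring
    -- step 2 : covariance of truncations
    have hcov : |(∫ ω, trunc M (X 0 ω) * trunc M (X ℓ ω) ∂μ)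
        - (∫ ω, trunc M (X 0 ω) ∂μ) * ∫ ω, trunc M (X ℓ ω) ∂μ| ≤ 2 * M * η r := by
      have h := hηdep r 1 1 (fun _ => 0) (fun _ => ℓ) monotone_const monotone_const
        (fun a b => by simp [← hrℓ]) (fun v => trunc M (v 0)) (fun v => trunc M (v 0))
        1 1 M M (fun x => trunc_abs_le (by linarith) _) (fun x => trunc_abs_le (by linarith) _)
        (fun x y => by simpa [Fin.sum_univ_one] using trunc_lip M (x 0) (y 0))
        (fun x y => by simpa [Fin.sum_univ_one] using trunc_lip M (x 0) (y 0))
      refine le_trans (le_of_eq ?_) (h.trans (le_of_eq (by push_cast; ring)))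
      rfl
    -- step 3 : means of truncations
    have hmean : ∀ i : ℤ, |∫ ω, trunc M (X i ω) ∂μ| ≤ Em / M ^ (m - 1) := by
      intro i
      have h0 : ∫ ω, trunc M (X i ω) ∂μ = ∫ ω, (trunc M (X i ω) - X i ω) ∂μ := by
        rw [integral_sub (htint M (by linarith) i) (hXi i), hzero i, sub_zero]
      rw [h0]
      have h1 := norm_integral_le_integral_norm
        (fun ω => trunc M (X i ω) - X i ω) (μ := μ)
      simp only [Real.norm_eq_abs] at h1
      refine h1.trans ?_
      have h2 : ∫ ω, |trunc M (X i ω) - X i ω| ∂μ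
          ≤ ∫ ω, |X i ω| ^ m / M ^ (m - 1) ∂μ := by
        refine integral_mono_of_nonneg (Eventually.of_forall fun ω => abs_nonneg _)
          ((hXmi i).div_const _) (Eventually.of_forall fun ω => ?_)
        show |trunc M (X i ω) - X i ω| ≤ |X i ω| ^ m / M ^ (m - 1)
        rw [abs_sub_comm]
        exact sub_trunc_le hM1 (by linarith) _
      refine h2.trans (le_of_eq ?_)
      rw [integral_div, hEm i]
    have hprodmean : |(∫ ω, trunc M (X 0 ω) ∂μ) * ∫ ω, trunc M (X ℓ ω) ∂μ|
        ≤ Em * Em / M ^ (m - 2) := by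
      rw [abs_mul]
      refine (mul_le_mul (hmean 0) (hmean ℓ) (abs_nonneg _) (by positivity)).trans ?_
      rw [div_mul_div_comm, ← Real.rpow_add hM0]
      have hd : M ^ (m - 2) ≤ M ^ (m - 1 + (m - 1)) :=
        Real.rpow_le_rpow_of_exponent_le hM1 (by linarith)
      exact div_le_div_of_nonneg_left (by nlinarith) hMm2 hd
    -- assemble
    have htotal : |R ℓ| ≤ 4 * Em / M ^ (m - 2) + 2 * M * η r + Em * Em / M ^ (m - 2) := by
      set A := ∫ ω, trunc M (X 0 ω) * trunc M (X ℓ ω) ∂μ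
      set B := (∫ ω, trunc M (X 0 ω) ∂μ) * ∫ ω, trunc M (X ℓ ω) ∂μ
      have t1 : R ℓ = (R ℓ - A) + ((A - B) + B) := by ring
      calc |R ℓ| = |(R ℓ - A) + ((A - B) + B)| := by rw [← t1]
        _ ≤ |R ℓ - A| + |(A - B) + B| := abs_add_le _ _
        _ ≤ |R ℓ - A| + (|A - B| + |B|) := by
            have := abs_add_le (A - B) B
            linarith
        _ ≤ 4 * Em / M ^ (m - 2) + 2 * M * η r + Em * Em / M ^ (m - 2) := by
            have := hRA; have := hcov; have := hprodmean
            linarith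
    -- rpow arithmetic
    have hmne : m - 1 ≠ 0 := by linarith
    have hMr : M ^ (m - 2) = (r:ℝ) ^ β := by
      rw [hMdef, ← Real.rpow_mul (Nat.cast_nonneg r)]
      congr 1
      rw [hβ]
      field_simp
    have hMinv : (M ^ (m - 2))⁻¹ = (r:ℝ) ^ (-β) := by
      rw [hMr, ← Real.rpow_neg hrR0.le]
    have hMη : M * η r ≤ K * (r:ℝ) ^ (-β) := by
      calc M * η r ≤ M * (K * (r:ℝ) ^ (-α)) :=
            mul_le_mul_of_nonneg_left (hKrate r hr1) (by linarith)
        _ = K * ((r:ℝ) ^ (α / (m - 1)) * (r:ℝ) ^ (-α)) := by rw [hMdef]; ring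
        _ = K * (r:ℝ) ^ (-β) := by
            rw [← Real.rpow_add hrR0]
            congr 1
            rw [hβ]
            field_simp
            ring
    have hfin : |R ℓ| ≤ (4 * Em + 2 * K + Em * Em) * (r:ℝ) ^ (-β) := by
      have h1 : 4 * Em / M ^ (m - 2) = 4 * Em * (r:ℝ) ^ (-β) := by
        rw [div_eq_mul_inv, hMinv]
      have h2 : Em * Em / M ^ (m - 2) = Em * Em * (r:ℝ) ^ (-β) := by
        rw [div_eq_mul_inv, hMinv]
      have h3 : 2 * M * η r ≤ 2 * (K * (r:ℝ) ^ (-β)) := by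
        have := hMη; linarith [mul_le_mul_of_nonneg_left hMη (by norm_num : (0:ℝ) ≤ 2)]
      calc |R ℓ| ≤ 4 * Em / M ^ (m - 2) + 2 * M * η r + Em * Em / M ^ (m - 2) := htotal
        _ ≤ 4 * Em * (r:ℝ) ^ (-β) + 2 * (K * (r:ℝ) ^ (-β)) + Em * Em * (r:ℝ) ^ (-β) := by
            rw [h1, h2] at htotal ⊢
            linarith
        _ = (4 * Em + 2 * K + Em * Em) * (r:ℝ) ^ (-β) := by ring
    have : ((ℓ:ℤ):ℝ) = (r:ℝ) := by exact_mod_cast hrℓ.symm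
    rw [this]
    exact hfin
  have hRsymm : ∀ ℓ : ℤ, R ℓ = R (-ℓ) := by
    intro ℓ
    have hmul : Measurable fun v : Fin 2 → ℝ => v 0 * v 1 :=
      (measurable_pi_apply 0).mul (measurable_pi_apply 1)
    have h := shift (-ℓ) 2 ![(0:ℤ), ℓ] _ hmul
    simp only [Matrix.cons_val_zero, Matrix.cons_val_one, Matrix.head_cons, zero_add,
      add_neg_cancel] at h
    rw [hR ℓ, hR (-ℓ), ← h]
    exact integral_congr_ae (Eventually.of_forall fun ω => mul_comm _ _)
  have hβ2 : 2 < β := by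
    rw [hβ, lt_div_iff₀ hm1]; nlinarith
  set c := 4 * Em + 2 * K + Em * Em + 1 with hc
  have hcpos : 0 < c := by
    have := mul_self_nonneg Em
    rw [hc]; linarith
  have part1 : ∀ ℓ : ℤ, ℓ ≠ 0 → |R ℓ| ≤ c * |(ℓ : ℝ)| ^ (-β) := by
    intro ℓ hℓ
    have hpow_nonneg : (0:ℝ) ≤ |(ℓ : ℝ)| ^ (-β) := Real.rpow_nonneg (abs_nonneg _) _
    have hcc : (4 * Em + 2 * K + Em * Em) ≤ c := by rw [hc]; linarith
    rcases lt_or_gt_of_ne hℓ with h | h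
    · have h1 := key (-ℓ) (by omega)
      have h2 : ((-ℓ : ℤ) : ℝ) = |(ℓ : ℝ)| := by
        rw [abs_of_neg (by exact_mod_cast h : (ℓ:ℝ) < 0)]
        push_cast
        ring
      rw [h2] at h1
      rw [hRsymm ℓ]
      exact h1.trans (mul_le_mul_of_nonneg_right hcc hpow_nonneg)
    · have h1 := key ℓ (by omega)
      have h2 : ((ℓ : ℤ) : ℝ) = |(ℓ : ℝ)| := by
        rw [abs_of_pos (by exact_mod_cast h : (0:ℝ) < (ℓ:ℝ))]
      rw [h2] at h1
      exact h1.trans (mul_le_mul_of_nonneg_right hcc hpow_nonneg)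
  refine ⟨⟨c, hcpos, part1⟩, ?_⟩
  refine ⟨4 * c ^ 2 + 1, by positivity, ?_⟩
  intro n hn
  have hn0 : (0:ℝ) < (n:ℝ) := by exact_mod_cast hn
  have hn1 : (1:ℝ) ≤ (n:ℝ) := by exact_mod_cast hn
  set s := 2 * α * (m - 2) / (m - 1) with hs
  have hsβ : s = 2 * β := by rw [hs, hβ]; ring
  -- the natural-number comparison sequence
  set G : ℕ → ℝ := fun k => if n ≤ k then (((k:ℝ)) ^ 2)⁻¹ else 0 with hG
  have hGnonneg : ∀ k, 0 ≤ G k := by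
    intro k
    rw [hG]
    dsimp only
    split <;> positivity
  have hGsum_le : ∀ t : Finset ℕ, ∑ k ∈ t, G k ≤ 2 / n := by
    intro t
    have h1 : ∑ k ∈ t, G k = ∑ k ∈ t.filter (fun k => n ≤ k), ((k:ℝ) ^ 2)⁻¹ :=
      (Finset.sum_filter _ _).symm
    rw [h1]
    have h2 : t.filter (fun k => n ≤ k) ⊆ Finset.Ioo (n - 1) (t.sup id + 1) := by
      intro k hk
      simp only [Finset.mem_filter] at hk
      have := Finset.le_sup (f := id) hk.1
      simp only [id] at this
      simp only [Finset.mem_Ioo]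
      omega
    refine (Finset.sum_le_sum_of_subset_of_nonneg h2 (fun i _ _ => by positivity)).trans ?_
    refine (sum_Ioo_inv_sq_le (α := ℝ) (n - 1) (t.sup id + 1)).trans (le_of_eq ?_)
    congr 1
    rw [Nat.cast_sub hn]
    ring
  have hGsummable : Summable G :=
    summable_of_sum_range_le hGnonneg (fun k => hGsum_le _)
  have hGtsum : ∑' k, G k ≤ 2 / n := Summable.tsum_le_of_sum_le hGsummable hGsum_le
  -- the ℤ-indexed comparison sequence
  set F : ℤ → ℝ := fun ℓ => if (n:ℤ) ≤ |ℓ| then (((ℓ:ℝ)) ^ 2)⁻¹ else 0 with hF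
  have hFnonneg : ∀ ℓ, 0 ≤ F ℓ := by
    intro ℓ
    rw [hF]
    dsimp only
    split <;> positivity
  have hFnat : ∀ k : ℕ, F (k : ℤ) = G k := by
    intro k
    rw [hF, hG]
    dsimp only
    rw [Int.abs_natCast]
    norm_cast
  have hFneg : ∀ k : ℕ, F (-((k : ℤ) + 1)) = G (k + 1) := by
    intro k
    rw [hF, hG]
    dsimp only
    have hcond : ((n:ℤ) ≤ |(-((k:ℤ)+1))|) ↔ (n ≤ k + 1) := by
      rw [abs_neg, abs_of_nonneg (by omega)]
      omega
    by_cases h : n ≤ k + 1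
    · rw [if_pos (hcond.mpr h), if_pos h]
      congr 1
      push_cast
      ring
    · rw [if_neg (fun hh => h (hcond.mp hh)), if_neg h]
  have hFnatsummable : Summable (fun k : ℕ => F (k : ℤ)) := by
    refine hGsummable.congr fun k => (hFnat k).symm
  have hFnegsummable : Summable (fun k : ℕ => F (-((k : ℤ) + 1))) := by
    refine (hGsummable.comp_injective (add_left_injective 1)).congr fun k => ?_
    exact (hFneg k).symm
  have hFsummable : Summable F := Summable.of_nat_of_neg_add_one hFnatsummable hFnegsummable
  have hFtsum : ∑' ℓ : ℤ, F ℓ ≤ 4 / n := by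
    rw [tsum_of_nat_of_neg_add_one hFnatsummable hFnegsummable]
    have t1 : ∑' k : ℕ, F (k : ℤ) ≤ 2 / n := by
      rw [tsum_congr hFnat]
      exact hGtsum
    have t2 : ∑' k : ℕ, F (-((k : ℤ) + 1)) ≤ 2 / n := by
      have e : ∑' k : ℕ, F (-((k : ℤ) + 1)) = ∑' k : ℕ, G (k + 1) :=
        tsum_congr hFneg
      rw [e]
      refine le_trans (Summable.tsum_le_tsum_of_inj (· + 1) (add_left_injective 1)
        (fun c _ => hGnonneg c) (fun k => le_rfl)
        (hGsummable.comp_injective (add_left_injective 1)) hGsummable) hGtsum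
    calc ∑' k : ℕ, F (k : ℤ) + ∑' k : ℕ, F (-((k : ℤ) + 1)) ≤ 2 / n + 2 / n := by
          exact add_le_add t1 t2
      _ = 4 / n := by ring
  -- pointwise bound on the subtype
  set S : Set ℤ := {ℓ : ℤ | (n:ℤ) ≤ |ℓ|} with hS
  have hβ2' : (0:ℝ) < 2 * β - 2 := by linarith
  have hCpos : (0:ℝ) ≤ c ^ 2 * (n:ℝ) ^ (2 - s) := by positivity
  have hpt : ∀ ℓ : ℤ, (n:ℤ) ≤ |ℓ| → R ℓ ^ 2 ≤ c ^ 2 * (n:ℝ) ^ (2 - s) * ((ℓ:ℝ) ^ 2)⁻¹ := by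
    intro ℓ hℓS
    have hℓ0 : ℓ ≠ 0 := by
      intro h
      rw [h] at hℓS
      simp at hℓS
      omega
    have hℓn : (n:ℝ) ≤ |(ℓ:ℝ)| := by
      have : ((n:ℤ) : ℝ) ≤ ((|ℓ| : ℤ) : ℝ) := by exact_mod_cast hℓS
      rwa [Int.cast_abs] at this
    have hℓ1 : (1:ℝ) ≤ |(ℓ:ℝ)| := le_trans hn1 hℓn
    have hℓpos : (0:ℝ) < |(ℓ:ℝ)| := by linarith
    have hb := part1 ℓ hℓ0
    have h1 : R ℓ ^ 2 ≤ (c * |(ℓ:ℝ)| ^ (-β)) ^ 2 := by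
      rw [← sq_abs (R ℓ)]
      exact pow_le_pow_left₀ (abs_nonneg _) hb 2
    have h2 : (c * |(ℓ:ℝ)| ^ (-β)) ^ 2 = c ^ 2 * |(ℓ:ℝ)| ^ (-(2*β)) := by
      rw [mul_pow]
      congr 1
      rw [← Real.rpow_natCast (|(ℓ:ℝ)| ^ (-β)) 2, ← Real.rpow_mul (abs_nonneg _)]
      congr 1
      push_cast
      ring
    have h3 : |(ℓ:ℝ)| ^ (-(2*β)) = |(ℓ:ℝ)| ^ (-(2*β-2)) * |(ℓ:ℝ)| ^ (-(2:ℝ)) := by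
      rw [← Real.rpow_add hℓpos]
      ring_nf
    have h4 : |(ℓ:ℝ)| ^ (-(2*β-2)) ≤ (n:ℝ) ^ (-(2*β-2)) := by
      rw [Real.rpow_neg (abs_nonneg _), Real.rpow_neg hn0.le]
      have := Real.rpow_le_rpow hn0.le hℓn hβ2'.le
      exact inv_anti₀ (by positivity) this
    have h5 : |(ℓ:ℝ)| ^ (-(2:ℝ)) = ((ℓ:ℝ) ^ 2)⁻¹ := by
      rw [Real.rpow_neg (abs_nonneg _), show ((2:ℝ)) = ((2:ℕ):ℝ) by norm_num,
        Real.rpow_natCast, sq_abs]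
    have h6 : (n:ℝ) ^ (-(2*β-2)) = (n:ℝ) ^ (2 - s) := by
      congr 1
      rw [hsβ]
      ring
    calc R ℓ ^ 2 ≤ (c * |(ℓ:ℝ)| ^ (-β)) ^ 2 := h1
      _ = c ^ 2 * (|(ℓ:ℝ)| ^ (-(2*β-2)) * |(ℓ:ℝ)| ^ (-(2:ℝ))) := by rw [h2, h3]
      _ ≤ c ^ 2 * ((n:ℝ) ^ (2 - s) * ((ℓ:ℝ) ^ 2)⁻¹) := by
          rw [h5]
          refine mul_le_mul_of_nonneg_left ?_ (by positivity)
          refine mul_le_mul_of_nonneg_right ?_ (by positivity)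
          rw [← h6]
          exact h4
      _ = c ^ 2 * (n:ℝ) ^ (2 - s) * ((ℓ:ℝ) ^ 2)⁻¹ := by ring
  -- summability over the subtype and conclusion
  have hsubF : Summable (fun ℓ : {ℓ : ℤ // (n:ℤ) ≤ |ℓ|} =>
      c ^ 2 * (n:ℝ) ^ (2 - s) * ((((ℓ:ℤ):ℝ)) ^ 2)⁻¹) := by
    have h1 : Summable (fun ℓ : ℤ => (((ℓ:ℝ)) ^ 2)⁻¹ ) := by
      have hnat : Summable (fun k : ℕ => (((k:ℝ)) ^ 2)⁻¹) := by
        simpa [one_div] using Real.summable_one_div_nat_pow.mpr (le_refl 2)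
      refine Summable.of_nat_of_neg_add_one (hnat.congr fun k => by norm_num) ?_
      refine ((hnat.comp_injective (add_left_injective 1)).congr fun k => ?_)
      show ((((k:ℕ) + 1 : ℕ):ℝ) ^ 2)⁻¹ = (((( -((k:ℤ) + 1)) : ℤ):ℝ) ^ 2)⁻¹
      congr 1
      push_cast
      ring
    exact ((h1.mul_left _).subtype _)
  have hsubR : Summable (fun ℓ : {ℓ : ℤ // (n:ℤ) ≤ |ℓ|} => R (ℓ:ℤ) ^ 2) := by
    refine Summable.of_nonneg_of_le (fun ℓ => sq_nonneg _) (fun ℓ => hpt (ℓ:ℤ) ℓ.2) hsubF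
  have e1 : (∑' ℓ : {ℓ : ℤ // (n:ℤ) ≤ |ℓ|}, ((((ℓ:ℤ):ℝ)) ^ 2)⁻¹) = ∑' ℓ : ℤ, F ℓ := by
    refine (tsum_subtype S (fun ℓ : ℤ => (((ℓ:ℝ)) ^ 2)⁻¹)).trans (tsum_congr fun ℓ => ?_)
    by_cases h : (n:ℤ) ≤ |ℓ|
    · rw [Set.indicator_of_mem (show ℓ ∈ S from h), hF]
      dsimp only
      rw [if_pos h]
    · rw [Set.indicator_of_notMem (show ℓ ∉ S from h), hF]
      dsimp only
      rw [if_neg h]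
  calc (∑' ℓ : {ℓ : ℤ // (n:ℤ) ≤ |ℓ|}, R (ℓ:ℤ) ^ 2)
      ≤ ∑' ℓ : {ℓ : ℤ // (n:ℤ) ≤ |ℓ|}, c ^ 2 * (n:ℝ) ^ (2 - s) * ((((ℓ:ℤ):ℝ)) ^ 2)⁻¹ :=
        Summable.tsum_le_tsum (fun ℓ => hpt (ℓ:ℤ) ℓ.2) hsubR hsubF
    _ = c ^ 2 * (n:ℝ) ^ (2 - s) * ∑' ℓ : {ℓ : ℤ // (n:ℤ) ≤ |ℓ|}, ((((ℓ:ℤ):ℝ)) ^ 2)⁻¹ :=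
        tsum_mul_left
    _ ≤ c ^ 2 * (n:ℝ) ^ (2 - s) * (4 / n) := by
        refine mul_le_mul_of_nonneg_left ?_ hCpos
        rw [e1]
        exact hFtsum
    _ ≤ (4 * c ^ 2 + 1) * (n:ℝ) ^ (1 - s) := by
        have e2 : (n:ℝ) ^ (1 - s) = (n:ℝ) ^ (2 - s) / n := by
          rw [show (1:ℝ) - s = (2 - s) - 1 by ring, Real.rpow_sub hn0, Real.rpow_one]
        have hpow : (0:ℝ) ≤ (n:ℝ) ^ (1 - s) := by positivity
        have e3 : c ^ 2 * (n:ℝ) ^ (2 - s) * (4 / n) = 4 * c ^ 2 * (n:ℝ) ^ (1 - s) := by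
          rw [e2]
          field_simp
        rw [e3]
        nlinarith
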